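/- Let $n \geq 1$ and let $T_n$ be the $n \times n$ tridiagonal matrix over a field with diagonal entries $d_1, \dots, d_n$, superdiagonal entries $a_1, \dots, a_{n-1}$, and subdiagonal entries $b_1, \dots, b_{n-1}$. Let $1 \leq m \leq n$ and suppose the sequence $c$ defined by $c_1 = d_1$, $c_i = d_i - a_{i-1}b_{i-1}/c_{i-1}$, satisfies $c_i \neq 0$ for $i = 1, \dots, m-1$ (so that $c_1, \dots, c_m$ are well-defined). Define $f_i = \prod_{r=1}^{i} c_r$ for $1 \leq i \leq m$ and $f_k = d_k f_{k-1} - a_{k-1} b_{k-1} f_{k-2}$ for $m+1 \leq k \leq n$ (with $f_0 = 1$). Then $f_n = \det(T_n)$. -/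

import Mathlib

/-- The `n × n` tridiagonal matrix with (1-indexed) diagonal entries `d 1, …, d n`,
superdiagonal entries `a 1, …, a (n-1)` and subdiagonal entries `b 1, …, b (n-1)`. -/
def tridiag {F : Type*} [Field F] (n : ℕ) (d a b : ℕ → F) :
    Matrix (Fin n) (Fin n) F :=
  Matrix.of fun i j =>
    if (i : ℕ) = (j : ℕ) then d ((i : ℕ) + 1)
    else if (j : ℕ) = (i : ℕ) + 1 then a ((i : ℕ) + 1)
    else if (i : ℕ) = (j : ℕ) + 1 then b ((j : ℕ) + 1)
    else 0

/-- The auxiliary sequence `c 1 = d 1`, `c i = d i - a (i-1) * b (i-1) / c (i-1)`. -/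
def cseq {F : Type*} [Field F] (d a b : ℕ → F) : ℕ → F
  | 0 => 0
  | 1 => d 1
  | (k + 2) => d (k + 2) - a (k + 1) * b (k + 1) / cseq d a b (k + 1)

/-- The hybrid sequence of Algorithm 3: `f 0 = 1`, `f i = ∏_{r=1}^{i} c r` for
`1 ≤ i ≤ m`, and `f k = d k * f (k-1) - a (k-1) * b (k-1) * f (k-2)` for `k > m`. -/
def hybridSeq {F : Type*} [Field F] (d a b : ℕ → F) (m : ℕ) : ℕ → F
  | 0 => 1
  | (k + 1) =>
    if k + 1 ≤ m then ∏ r ∈ Finset.Icc 1 (k + 1), cseq d a b r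
    else d (k + 1) * hybridSeq d a b m k - a k * b k * hybridSeq d a b m (k - 1)
  termination_by k => k
  decreasing_by all_goals omega

lemma tridiag_apply {F : Type*} [Field F] (n : ℕ) (d a b : ℕ → F) (i j : Fin n) :
    tridiag n d a b i j =
    if (i : ℕ) = (j : ℕ) then d ((i : ℕ) + 1)
    else if (j : ℕ) = (i : ℕ) + 1 then a ((i : ℕ) + 1)
    else if (i : ℕ) = (j : ℕ) + 1 then b ((j : ℕ) + 1)
    else 0 := rfl

-- generic entry computer
lemma tridiag_apply_d {F : Type*} [Field F] {n : ℕ} (d a b : ℕ → F) {i j : Fin n}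
    (h : (i:ℕ) = (j:ℕ)) : tridiag n d a b i j = d ((i:ℕ)+1) := by
  rw [tridiag_apply, if_pos h]

lemma tridiag_apply_a {F : Type*} [Field F] {n : ℕ} (d a b : ℕ → F) {i j : Fin n}
    (h : (j:ℕ) = (i:ℕ)+1) : tridiag n d a b i j = a ((i:ℕ)+1) := by
  rw [tridiag_apply, if_neg (by omega), if_pos h]

lemma tridiag_apply_b {F : Type*} [Field F] {n : ℕ} (d a b : ℕ → F) {i j : Fin n}
    (h : (i:ℕ) = (j:ℕ)+1) : tridiag n d a b i j = b ((j:ℕ)+1) := by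
  rw [tridiag_apply, if_neg (by omega), if_neg (by omega), if_pos h]

lemma tridiag_apply_zero {F : Type*} [Field F] {n : ℕ} (d a b : ℕ → F) {i j : Fin n}
    (h1 : (i:ℕ) ≠ (j:ℕ)) (h2 : (j:ℕ) ≠ (i:ℕ)+1) (h3 : (i:ℕ) ≠ (j:ℕ)+1) :
    tridiag n d a b i j = 0 := by
  rw [tridiag_apply, if_neg h1, if_neg h2, if_neg h3]

lemma succAbove_val {n : ℕ} (p : Fin (n+1)) (j : Fin n) :
    ((p.succAbove j : Fin (n+1)) : ℕ) = if (j:ℕ) < (p:ℕ) then (j:ℕ) else (j:ℕ)+1 := by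
  rw [Fin.succAbove]
  split
  · rw [if_pos (by simpa [Fin.lt_def] using ‹_›)]; rfl
  · rw [if_neg (by
      have h := Fin.not_lt.mp ‹_›
      rw [Fin.le_def] at h
      simp only [Fin.coe_castSucc] at h
      omega)]
    rfl

lemma tridiag_det_rec {F : Type*} [Field F] (d a b : ℕ → F) (k : ℕ) :
    (tridiag (k+2) d a b).det =
      d (k+2) * (tridiag (k+1) d a b).det - a (k+1) * b (k+1) * (tridiag k d a b).det := by
  rw [Matrix.det_succ_row _ (Fin.last (k+1)), Fin.sum_univ_castSucc, Fin.sum_univ_castSucc]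
  have hz : ∀ j : Fin k,
      (tridiag (k+2) d a b) (Fin.last (k+1)) (Fin.castSucc (Fin.castSucc j)) = 0 := by
    intro j
    have hj := j.is_lt
    apply tridiag_apply_zero <;> simp <;> omega
  rw [Finset.sum_eq_zero (fun j _ => by rw [hz j]; ring), zero_add]
  -- term B : j = last, minor = tridiag (k+1)
  have hB : (tridiag (k+2) d a b).submatrix (Fin.last (k+1)).succAbove
      (Fin.last (k+1)).succAbove = tridiag (k+1) d a b := by
    ext i j
    rw [Matrix.submatrix_apply, Fin.succAbove_last, tridiag_apply, tridiag_apply]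
    simp
  have hBe : (tridiag (k+2) d a b) (Fin.last (k+1)) (Fin.last (k+1)) = d (k+2) := by
    rw [tridiag_apply_d d a b rfl, Fin.val_last]
  -- term A
  set N := (tridiag (k+2) d a b).submatrix (Fin.last (k+1)).succAbove
      (Fin.castSucc (Fin.last k)).succAbove with hN
  have hAe : (tridiag (k+2) d a b) (Fin.last (k+1)) (Fin.castSucc (Fin.last k)) = b (k+1) := by
    rw [tridiag_apply_b d a b (by simp)]
    simp
  have hsv : ∀ j : Fin (k+1),
      (((Fin.castSucc (Fin.last k)).succAbove j : Fin (k+2)) : ℕ)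
        = if (j:ℕ) < k then (j:ℕ) else (j:ℕ)+1 := by
    intro j; rw [succAbove_val]; simp
  have hNval : ∀ (i : Fin (k+1)) (j : Fin (k+1)), N i j =
      (tridiag (k+2) d a b) (Fin.castSucc i)
        ((Fin.castSucc (Fin.last k)).succAbove j) := by
    intro i j
    rw [hN, Matrix.submatrix_apply, Fin.succAbove_last]
  have hNdet : N.det = a (k+1) * (tridiag k d a b).det := by
    rw [Matrix.det_succ_column _ (Fin.last k), Fin.sum_univ_castSucc]
    have hcol : ∀ i : Fin k, N (Fin.castSucc i) (Fin.last k) = 0 := by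
      intro i
      have hi := i.is_lt
      rw [hNval]
      apply tridiag_apply_zero <;> rw [hsv] <;> simp <;> omega
    rw [Finset.sum_eq_zero (fun i _ => by rw [hcol i]; ring), zero_add]
    have hent : N (Fin.last k) (Fin.last k) = a (k+1) := by
      rw [hNval, tridiag_apply_a d a b (by rw [hsv]; simp)]
      simp
    have hmin : N.submatrix (Fin.last k).succAbove (Fin.last k).succAbove
        = tridiag k d a b := by
      ext i j
      have hj := j.is_lt
      rw [Matrix.submatrix_apply, Fin.succAbove_last, hNval, tridiag_apply, tridiag_apply]
      rw [hsv]
      simp [hj]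
    rw [hent, hmin]
    have h3 : ((Fin.last k : ℕ) + (Fin.last k : ℕ)) = 2 * k := by
      rw [Fin.val_last]; ring
    rw [h3, pow_mul]
    simp
  rw [hB, hBe, hAe, hNdet]
  have h1 : ((Fin.last (k+1) : ℕ) + ((Fin.castSucc (Fin.last k) : Fin (k+2)) : ℕ)) = 2*k+1 := by
    simp; omega
  have h2 : ((Fin.last (k+1) : ℕ) + (Fin.last (k+1) : ℕ)) = 2*(k+1) := by
    simp; omega
  rw [h1, h2, pow_succ, pow_mul, pow_mul]
  simp
  ring

lemma tridiag_det_zero {F : Type*} [Field F] (d a b : ℕ → F) : (tridiag 0 d a b).det = 1 :=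
  Matrix.det_fin_zero

lemma tridiag_det_one {F : Type*} [Field F] (d a b : ℕ → F) : (tridiag 1 d a b).det = d 1 := by
  rw [Matrix.det_fin_one]
  exact tridiag_apply_d d a b rfl

lemma prod_cseq_eq_det {F : Type*} [Field F] (d a b : ℕ → F) (m : ℕ)
    (hc : ∀ i, 1 ≤ i → i ≤ m - 1 → cseq d a b i ≠ 0) :
    ∀ i, i ≤ m → ∏ r ∈ Finset.Icc 1 i, cseq d a b r = (tridiag i d a b).det := by
  intro i
  induction i using Nat.strong_induction_on with
  | _ i ih =>
    intro him
    match i, him with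
    | 0, _ => simp [tridiag_det_zero]
    | 1, _ => rw [Finset.Icc_self, Finset.prod_singleton, tridiag_det_one]; rfl
    | (j+2), him =>
      have h1 : ∏ r ∈ Finset.Icc 1 (j+2), cseq d a b r
          = (∏ r ∈ Finset.Icc 1 (j+1), cseq d a b r) * cseq d a b (j+2) :=
        Finset.prod_Icc_succ_top (by omega) _
      have h2 : ∏ r ∈ Finset.Icc 1 (j+1), cseq d a b r
          = (∏ r ∈ Finset.Icc 1 j, cseq d a b r) * cseq d a b (j+1) :=
        Finset.prod_Icc_succ_top (by omega) _
      have hcj : cseq d a b (j+1) ≠ 0 := hc (j+1) (by omega) (by omega)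
      rw [tridiag_det_rec, ← ih (j+1) (by omega) (by omega), ← ih j (by omega) (by omega),
        h1, h2,
        show cseq d a b (j+2) = d (j+2) - a (j+1) * b (j+1) / cseq d a b (j+1) from rfl]
      field_simp


/-- Correctness of the hybrid algorithm: if `c i ≠ 0` for `i = 1, …, m-1`,
then the hybrid sequence value at `n` equals `det Tₙ`. -/
theorem hybrid_algorithm_correct {F : Type*} [Field F] (n m : ℕ) (hn : 1 ≤ n)
    (hm : 1 ≤ m) (hmn : m ≤ n) (d a b : ℕ → F)
    (hc : ∀ i, 1 ≤ i → i ≤ m - 1 → cseq d a b i ≠ 0) :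
    hybridSeq d a b m n = (tridiag n d a b).det := by
  suffices h : ∀ j, hybridSeq d a b m j = (tridiag j d a b).det from h n
  intro j
  induction j using Nat.strong_induction_on with
  | _ j ih =>
    match j with
    | 0 => rw [hybridSeq]; exact (tridiag_det_zero d a b).symm
    | (k+1) =>
      rw [hybridSeq]
      by_cases h : k + 1 ≤ m
      · rw [if_pos h]; exact prod_cseq_eq_det d a b m hc (k+1) h
      · rw [if_neg h]
        obtain ⟨l, rfl⟩ : ∃ l, k = l + 1 := ⟨k - 1, by omega⟩
        simp only [Nat.add_sub_cancel]
        rw [ih (l+1) (by omega), ih l (by omega), tridiag_det_rec]
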